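/- arXiv:1403.0710 — 3 statements merged into one kernel-verified Lean document; each statement's English description precedes it below -/
import Mathlib

section
/- (Diego's theorem, syntactic form.) For every n, there are only finitely many (∧,→)-formulas over the variables p_1, …, p_n up to semantic equivalence: the quotient of the set of (∧,→)-formulas over n variables by the relation 'φ ≡ ψ if and only if for every model M on n variables and every x ∈ M, M, x ⊨ φ ⟺ M, x ⊨ ψ' is a finite set. -/
/-- `(∧,→)`-formulas over `n` propositional variables. -/
inductive MeetImpForm (n : ℕ) : Type
  | var (i : Fin n) : MeetImpForm n
  | and (φ ψ : MeetImpForm n) : MeetImpForm n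
  | imp (φ ψ : MeetImpForm n) : MeetImpForm n

/-- A Kripke model on `n` variables: a poset with a monotone colouring into
`Fin n → Bool` (pointwise order, `false < true`). -/
structure KripkeModel (n : ℕ) where
  W : Type
  [ord : PartialOrder W]
  col : W → Fin n → Bool
  mono : Monotone col

attribute [instance] KripkeModel.ord

/-- Kripke satisfaction of a `(∧,→)`-formula in a model. -/
def MeetImpSat {n : ℕ} (M : KripkeModel n) : MeetImpForm n → M.W → Prop
  | .var i, x => M.col x i = true
  | .and φ ψ, x => MeetImpSat M φ x ∧ MeetImpSat M ψ x
  | .imp φ ψ, x => ∀ y : M.W, x ≤ y → MeetImpSat M φ y → MeetImpSat M ψ y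

namespace DiegoProof

open Classical

variable {n : ℕ}

lemma sat_persist (M : KripkeModel n) (φ : MeetImpForm n) {x y : M.W} (h : x ≤ y) :
    MeetImpSat M φ x → MeetImpSat M φ y := by
  induction φ with
  | var i =>
    intro hx
    have := M.mono h i
    rw [Bool.le_iff_imp] at this
    exact this hx
  | and φ ψ ihφ ihψ => exact fun hx => ⟨ihφ hx.1, ihψ hx.2⟩
  | imp φ ψ ihφ ihψ => exact fun hx z hz hφ => hx z (le_trans h hz) hφ

/-- Finitary semantic consequence. -/
def Cons (Γ : List (MeetImpForm n)) (φ : MeetImpForm n) : Prop :=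
  ∀ (M : KripkeModel n) (x : M.W), (∀ γ ∈ Γ, MeetImpSat M γ x) → MeetImpSat M φ x

/-- A set of formulas closed under finitary semantic consequence. -/
def ClosedS (S : Set (MeetImpForm n)) : Prop :=
  ∀ (Γ : List (MeetImpForm n)) (φ : MeetImpForm n),
    (∀ γ ∈ Γ, γ ∈ S) → Cons Γ φ → φ ∈ S

/-- Finitary consequence closure. -/
def cl (S : Set (MeetImpForm n)) : Set (MeetImpForm n) :=
  {φ | ∃ Γ : List (MeetImpForm n), (∀ γ ∈ Γ, γ ∈ S) ∧ Cons Γ φ}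

lemma subset_cl (S : Set (MeetImpForm n)) : S ⊆ cl S := by
  intro φ hφ
  exact ⟨[φ], by simpa using hφ, fun M x h => h φ (by simp)⟩

lemma cl_mono {S T : Set (MeetImpForm n)} (h : S ⊆ T) : cl S ⊆ cl T := by
  rintro φ ⟨Γ, hΓ, hc⟩
  exact ⟨Γ, fun γ hγ => h (hΓ γ hγ), hc⟩

lemma cl_witness {S : Set (MeetImpForm n)} :
    ∀ Γ : List (MeetImpForm n), (∀ γ ∈ Γ, γ ∈ cl S) →
      ∃ Δ : List (MeetImpForm n), (∀ δ ∈ Δ, δ ∈ S) ∧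
        ∀ (M : KripkeModel n) (x : M.W),
          (∀ δ ∈ Δ, MeetImpSat M δ x) → ∀ γ ∈ Γ, MeetImpSat M γ x := by
  intro Γ hΓ
  induction Γ with
  | nil => exact ⟨[], by simp, by simp⟩
  | cons γ Γ' ih =>
    obtain ⟨Δ', hΔ'S, hΔ'⟩ := ih (fun g hg => hΓ g (by simp [hg]))
    obtain ⟨Δγ, hΔγS, hΔγc⟩ := hΓ γ (by simp)
    refine ⟨Δγ ++ Δ', ?_, ?_⟩
    · intro δ hδ
      rcases List.mem_append.mp hδ with h | h
      · exact hΔγS δ h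
      · exact hΔ'S δ h
    · intro M x hx g hg
      rcases List.mem_cons.mp hg with rfl | hg
      · exact hΔγc M x (fun d hd => hx d (by simp [hd]))
      · exact hΔ' M x (fun d hd => hx d (by simp [hd])) g hg

lemma cl_closed (S : Set (MeetImpForm n)) : ClosedS (cl S) := by
  intro Γ φ hΓ hc
  obtain ⟨Δ, hΔS, hΔ⟩ := cl_witness Γ hΓ
  exact ⟨Δ, hΔS, fun M x hx => hc M x (hΔ M x hx)⟩

lemma mem_cl_of_closed {S : Set (MeetImpForm n)} (hS : ClosedS S) : cl S ⊆ S := by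
  rintro φ ⟨Γ, hΓ, hc⟩
  exact hS Γ φ hΓ hc

/-- Deduction theorem (semantic, finitary). -/
lemma deduction {S : Set (MeetImpForm n)} (hS : ClosedS S) {α β : MeetImpForm n}
    (h : β ∈ cl (insert α S)) : MeetImpForm.imp α β ∈ S := by
  obtain ⟨Γ, hΓ, hc⟩ := h
  apply hS (Γ.filter (fun g => g ≠ α)) _ ?_ ?_
  · intro γ hγ
    have h1 := List.of_mem_filter hγ
    have h2 := List.mem_of_mem_filter hγ
    rcases hΓ γ h2 with h | h
    · exact absurd h (by simpa using h1)
    · exact h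
  · intro M x hx z hz hα
    apply hc M z
    intro γ hγ
    by_cases hga : γ = α
    · exact hga ▸ hα
    · exact sat_persist M γ hz
        (hx γ (List.mem_filter.mpr ⟨hγ, by simpa using hga⟩))

lemma theory_closed (M : KripkeModel n) (x : M.W) :
    ClosedS {ρ | MeetImpSat M ρ x} := by
  intro Γ φ hΓ hc
  exact hc M x (fun γ hγ => hΓ γ hγ)

/-- modus ponens / conjunction facts as consequences -/
lemma cons_mp (α β : MeetImpForm n) : Cons [α, α.imp β] β := by
  intro M x hx
  exact (hx (α.imp β) (by simp)) x le_rfl (hx α (by simp))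

lemma mem_of_imp_mem {S : Set (MeetImpForm n)} (hS : ClosedS S) {α β : MeetImpForm n}
    (h1 : α ∈ S) (h2 : α.imp β ∈ S) : β ∈ S :=
  hS [α, α.imp β] β (by
    intro γ hγ
    rcases List.mem_cons.mp hγ with rfl | hγ
    · exact h1
    · rcases List.mem_cons.mp hγ with rfl | hγ
      · exact h2
      · simp at hγ) (cons_mp α β)

end DiegoProof
namespace DiegoProof

variable {n : ℕ}

/-! ### Maximal avoiding extensions (Zorn) -/

lemma list_mem_chain_union {c : Set (Set (MeetImpForm n))}
    (hchain : IsChain (fun x1 x2 => x1 ⊆ x2) c) (hcne : c.Nonempty) :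
    ∀ Γ : List (MeetImpForm n), (∀ γ ∈ Γ, γ ∈ ⋃₀ c) →
      ∃ T ∈ c, ∀ γ ∈ Γ, γ ∈ T := by
  intro Γ
  induction Γ with
  | nil => exact fun _ => ⟨hcne.choose, hcne.choose_spec, by simp⟩
  | cons γ Γ' ih =>
    intro hΓ
    obtain ⟨T, hTc, hT⟩ := ih (fun g hg => hΓ g (by simp [hg]))
    obtain ⟨T', hT'c, hγT'⟩ := Set.mem_sUnion.mp (hΓ γ (by simp))
    by_cases hTT : T = T'
    · refine ⟨T, hTc, ?_⟩
      intro g hg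
      rcases List.mem_cons.mp hg with rfl | hg
      · exact hTT ▸ hγT'
      · exact hT g hg
    · rcases hchain hTc hT'c hTT with h | h
      · refine ⟨T', hT'c, ?_⟩
        intro g hg
        rcases List.mem_cons.mp hg with rfl | hg
        · exact hγT'
        · exact h (hT g hg)
      · refine ⟨T, hTc, ?_⟩
        intro g hg
        rcases List.mem_cons.mp hg with rfl | hg
        · exact h hγT'
        · exact hT g hg

lemma exists_maximal_avoiding {Θ : Set (MeetImpForm n)} (hΘ : ClosedS Θ)
    {χ : MeetImpForm n} (hχ : χ ∉ Θ) :
    ∃ Θm : Set (MeetImpForm n), ClosedS Θm ∧ Θ ⊆ Θm ∧ χ ∉ Θm ∧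
      ∀ Λ : Set (MeetImpForm n), ClosedS Λ → Θm ⊆ Λ → χ ∉ Λ → Λ = Θm := by
  classical
  set S : Set (Set (MeetImpForm n)) := {T | ClosedS T ∧ Θ ⊆ T ∧ χ ∉ T} with hSdef
  have hzorn := zorn_subset_nonempty S ?_ Θ ⟨hΘ, subset_rfl, hχ⟩
  · obtain ⟨m, hsub, hmax⟩ := hzorn
    refine ⟨m, hmax.1.1, hsub, hmax.1.2.2, ?_⟩
    intro Λ hΛc hΛsub hΛχ
    exact ((hmax.2 (y := Λ) ⟨hΛc, subset_trans hsub hΛsub, hΛχ⟩ hΛsub).antisymm hΛsub)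
  · intro c hcS hchain hcne
    refine ⟨⋃₀ c, ⟨?_, ?_, ?_⟩, fun s hs => Set.subset_sUnion_of_mem hs⟩
    · intro Γ φ hΓ hcons
      obtain ⟨T, hTc, hΓT⟩ := list_mem_chain_union hchain hcne Γ hΓ
      exact Set.mem_sUnion.mpr ⟨T, hTc, (hcS hTc).1 Γ φ hΓT hcons⟩
    · intro φ hφ
      obtain ⟨T, hTc⟩ := hcne
      exact Set.mem_sUnion.mpr ⟨T, hTc, (hcS hTc).2.1 hφ⟩
    · intro hmem
      obtain ⟨T, hTc, hin⟩ := Set.mem_sUnion.mp hmem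
      exact (hcS hTc).2.2 hin

end DiegoProof
namespace DiegoProof

variable {n : ℕ}

/-! ### Colour of a theory and colour deficit -/

open Classical in
/-- The set of variables in a theory, as a Finset. -/
noncomputable def colS (Θ : Set (MeetImpForm n)) : Finset (Fin n) :=
  Finset.univ.filter (fun i => MeetImpForm.var i ∈ Θ)

lemma mem_colS {Θ : Set (MeetImpForm n)} {i : Fin n} :
    i ∈ colS Θ ↔ MeetImpForm.var i ∈ Θ := by
  simp [colS]

lemma colS_mono {Θ Λ : Set (MeetImpForm n)} (h : Θ ⊆ Λ) : colS Θ ⊆ colS Λ := by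
  intro i hi
  exact mem_colS.mpr (h (mem_colS.mp hi))

/-- colour deficit -/
noncomputable def defc (Θ : Set (MeetImpForm n)) : ℕ := n - (colS Θ).card

lemma defc_le_n (Θ : Set (MeetImpForm n)) : defc Θ ≤ n := Nat.sub_le _ _

lemma defc_mono {Θ Λ : Set (MeetImpForm n)} (h : Θ ⊆ Λ) : defc Λ ≤ defc Θ :=
  Nat.sub_le_sub_left (Finset.card_le_card (colS_mono h)) n

lemma defc_lt {Θ Λ : Set (MeetImpForm n)} (h : Θ ⊆ Λ) {v : Fin n}
    (hv : MeetImpForm.var v ∉ Θ) (hv' : MeetImpForm.var v ∈ Λ) : defc Λ < defc Θ := by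
  have hcard : (colS Θ).card < (colS Λ).card := by
    apply Finset.card_lt_card
    refine ⟨colS_mono h, ?_⟩
    intro hsub
    exact hv (mem_colS.mp (hsub (mem_colS.mpr hv')))
  have hle : (colS Λ).card ≤ n := by
    simpa using Finset.card_le_card (Finset.subset_univ (colS Λ))
  simp only [defc]
  omega

lemma one_le_defc {Θ : Set (MeetImpForm n)} {v : Fin n}
    (hv : MeetImpForm.var v ∉ Θ) : 1 ≤ defc Θ := by
  have : (colS Θ).card < n := by
    have hsub : colS Θ ⊆ Finset.univ.erase v := by
      intro i hi
      refine Finset.mem_erase.mpr ⟨?_, Finset.mem_univ i⟩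
      rintro rfl
      exact hv (mem_colS.mp hi)
    calc (colS Θ).card ≤ (Finset.univ.erase v).card := Finset.card_le_card hsub
    _ < Finset.univ.card := Finset.card_erase_lt_of_mem (Finset.mem_univ v)
    _ = n := by simp
  simp only [defc]
  omega

/-! ### The finite universal structures -/

/-- Iterated tree-like points: level 0 = bare colour (a maximal point),
level `k+1` = colour together with a set of points one level down. -/
def Vt (n : ℕ) : ℕ → Type
  | 0 => Fin n → Bool
  | (k+1) => (Fin n → Bool) × Set (Vt n k)

instance Vt.finite (n : ℕ) : ∀ k, Finite (Vt n k)
  | 0 => by unfold Vt; infer_instance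
  | (k+1) => by
    have := Vt.finite n k
    unfold Vt
    infer_instance

/-- colour of a point -/
def vcol : ∀ {k : ℕ}, Vt n k → (Fin n → Bool)
  | 0, c => c
  | (_+1), w => w.1

/-- satisfaction of an implication given satisfaction of the parts -/
def visat (f g : ∀ k : ℕ, Vt n k → Prop) : ∀ k : ℕ, Vt n k → Prop
  | 0, w => f 0 w → g 0 w
  | (k+1), w => (∀ a ∈ w.2, visat f g k a) ∧ (f (k+1) w → g (k+1) w)

/-- satisfaction at tree-like points -/
def vsat : MeetImpForm n → ∀ k : ℕ, Vt n k → Prop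
  | .var i, k, w => vcol w i = true
  | .and φ ψ, k, w => vsat φ k w ∧ vsat ψ k w
  | .imp φ ψ, k, w => visat (vsat φ) (vsat ψ) k w

lemma vsat_imp_succ (φ ψ : MeetImpForm n) (k : ℕ) (w : Vt n (k+1)) :
    vsat (φ.imp ψ) (k+1) w ↔
      (∀ a ∈ w.2, vsat (φ.imp ψ) k a) ∧ (vsat φ (k+1) w → vsat ψ (k+1) w) :=
  Iff.rfl

lemma vsat_imp_zero (φ ψ : MeetImpForm n) (w : Vt n 0) :
    vsat (φ.imp ψ) 0 w ↔ (vsat φ 0 w → vsat ψ 0 w) := Iff.rfl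

/-- hereditary monotonicity of colours -/
def hm : ∀ {k : ℕ}, Vt n k → Prop
  | 0, _ => True
  | (k+1), w => ∀ a ∈ w.2, (∀ i, w.1 i = true → vcol a i = true) ∧ hm a

end DiegoProof
namespace DiegoProof

variable {n : ℕ}

lemma sat_and_iff (M : KripkeModel n) (φ ψ : MeetImpForm n) (x : M.W) :
    MeetImpSat M (φ.and ψ) x ↔ MeetImpSat M φ x ∧ MeetImpSat M ψ x := Iff.rfl

lemma vsat_imp_self {α β : MeetImpForm n} {k : ℕ} {w : Vt n k}
    (h : vsat (α.imp β) k w) : vsat α k w → vsat β k w := by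
  cases k with
  | zero => exact h
  | succ k => exact h.2

lemma and_left_mem {S : Set (MeetImpForm n)} (hS : ClosedS S) {ρ₁ ρ₂ : MeetImpForm n}
    (h : ρ₁.and ρ₂ ∈ S) : ρ₁ ∈ S := by
  apply hS [ρ₁.and ρ₂] ρ₁ (by simpa using h)
  intro M x hx
  exact ((sat_and_iff M ρ₁ ρ₂ x).mp (hx _ (by simp))).1

lemma and_right_mem {S : Set (MeetImpForm n)} (hS : ClosedS S) {ρ₁ ρ₂ : MeetImpForm n}
    (h : ρ₁.and ρ₂ ∈ S) : ρ₂ ∈ S := by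
  apply hS [ρ₁.and ρ₂] ρ₂ (by simpa using h)
  intro M x hx
  exact ((sat_and_iff M ρ₁ ρ₂ x).mp (hx _ (by simp))).2

lemma and_mem {S : Set (MeetImpForm n)} (hS : ClosedS S) {ρ₁ ρ₂ : MeetImpForm n}
    (h1 : ρ₁ ∈ S) (h2 : ρ₂ ∈ S) : ρ₁.and ρ₂ ∈ S := by
  apply hS [ρ₁, ρ₂] (ρ₁.and ρ₂) ?_ ?_
  · intro γ hγ
    rcases List.mem_cons.mp hγ with rfl | hγ
    · exact h1
    · rcases List.mem_cons.mp hγ with rfl | hγ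
      · exact h2
      · simp at hγ
  · intro M x hx
    exact (sat_and_iff M ρ₁ ρ₂ x).mpr ⟨hx ρ₁ (by simp), hx ρ₂ (by simp)⟩

/-- The key realization/separation theorem. -/
theorem Jmain (d : ℕ) : ∀ (χ : MeetImpForm n) (Θ : Set (MeetImpForm n)),
    ClosedS Θ → defc Θ ≤ d → χ ∉ Θ → ∀ k, d < k →
    ∃ w : Vt n k, hm w ∧ (∀ ρ ∈ Θ, vsat ρ k w) ∧ ¬ vsat χ k w := by
  induction d using Nat.strong_induction_on with
  | _ d IHd =>
  intro χ
  induction χ with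
  | and χ₁ χ₂ ih1 ih2 =>
    intro Θ hΘc hΘd hχ k hk
    have : χ₁ ∉ Θ ∨ χ₂ ∉ Θ := by
      by_contra hcon
      push_neg at hcon
      exact hχ (and_mem hΘc hcon.1 hcon.2)
    rcases this with h | h
    · obtain ⟨w, hw1, hw2, hw3⟩ := ih1 Θ hΘc hΘd h k hk
      exact ⟨w, hw1, hw2, fun hc => hw3 hc.1⟩
    · obtain ⟨w, hw1, hw2, hw3⟩ := ih2 Θ hΘc hΘd h k hk
      exact ⟨w, hw1, hw2, fun hc => hw3 hc.2⟩
  | imp α β ihα ihβ =>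
    intro Θ hΘc hΘd hχ k hk
    set Θt := cl (insert α Θ) with hΘt
    have hΘtc : ClosedS Θt := cl_closed _
    have hΘsub : Θ ⊆ Θt := subset_trans (Set.subset_insert _ _) (subset_cl _)
    have hβ : β ∉ Θt := fun hβ' => hχ (deduction hΘc hβ')
    obtain ⟨w, hw1, hw2, hw3⟩ :=
      ihβ Θt hΘtc (le_trans (defc_mono hΘsub) hΘd) hβ k hk
    refine ⟨w, hw1, fun ρ hρ => hw2 ρ (hΘsub hρ), ?_⟩
    intro hc
    exact hw3 (vsat_imp_self hc (hw2 α (subset_cl _ (Set.mem_insert _ _))))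
  | var i =>
    intro Θ hΘc hΘd hχ k hk
    classical
    -- d ≥ 1 and k = k'+1
    have hd1 : 1 ≤ d := le_trans (one_le_defc hχ) hΘd
    obtain ⟨k', rfl⟩ : ∃ k', k = k' + 1 := by
      cases k with
      | zero => omega
      | succ k' => exact ⟨k', rfl⟩
    have hk' : d - 1 < k' := by omega
    -- Zorn
    obtain ⟨Θm, hΘmc, hΘmsub, hΘmi, hΘmmax⟩ := exists_maximal_avoiding hΘc hχ
    set Θ' := cl (insert (MeetImpForm.var i) Θm) with hΘ'def
    have hΘ'c : ClosedS Θ' := cl_closed _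
    have hΘmΘ' : Θm ⊆ Θ' := subset_trans (Set.subset_insert _ _) (subset_cl _)
    have hiΘ' : MeetImpForm.var i ∈ Θ' := subset_cl _ (Set.mem_insert _ _)
    have hd' : defc Θ' ≤ d - 1 := by
      have h1 : defc Θ' < defc Θm := defc_lt hΘmΘ' hΘmi hiΘ'
      have h2 : defc Θm ≤ defc Θ := defc_mono hΘmsub
      omega
    -- maximality consequence
    have hmaxcons : ∀ α : MeetImpForm n, α ∉ Θm → Θ' ⊆ cl (insert α Θm) := by
      intro α hα
      set Λ := cl (insert α Θm) with hΛ
      have hΛc : ClosedS Λ := cl_closed _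
      have hΛsub : Θm ⊆ Λ := subset_trans (Set.subset_insert _ _) (subset_cl _)
      have hvi : MeetImpForm.var i ∈ Λ := by
        by_contra hni
        have := hΘmmax Λ hΛc hΛsub hni
        exact hα (this ▸ subset_cl _ (Set.mem_insert _ _))
      have : insert (MeetImpForm.var i) Θm ⊆ Λ := by
        intro ρ hρ
        rcases Set.mem_insert_iff.mp hρ with rfl | hρ
        · exact hvi
        · exact hΛsub hρ
      exact subset_trans (cl_mono this) (mem_cl_of_closed hΛc)
    -- children witnesses
    have IH' : ∀ ξ : MeetImpForm n, ξ ∉ Θ' →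
        ∃ a : Vt n k', hm a ∧ (∀ ρ ∈ Θ', vsat ρ k' a) ∧ ¬ vsat ξ k' a := by
      intro ξ hξ
      exact IHd (d - 1) (by omega) ξ Θ' hΘ'c hd' hξ k' hk'
    let wit : ∀ ξ : MeetImpForm n, ξ ∉ Θ' → Vt n k' := fun ξ hξ => (IH' ξ hξ).choose
    have witspec : ∀ (ξ : MeetImpForm n) (hξ : ξ ∉ Θ'),
        hm (wit ξ hξ) ∧ (∀ ρ ∈ Θ', vsat ρ k' (wit ξ hξ)) ∧ ¬ vsat ξ k' (wit ξ hξ) :=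
      fun ξ hξ => (IH' ξ hξ).choose_spec
    let c : Fin n → Bool := fun j => if MeetImpForm.var j ∈ Θm then true else false
    let A : Set (Vt n k') := {a | ∃ ξ, ∃ hξ : ξ ∉ Θ', a = wit ξ hξ}
    let w : Vt n (k' + 1) := (c, A)
    have hw2A : w.2 = A := rfl
    have hwc : w.1 = c := rfl
    -- the key two-way lemma
    have key : ∀ ρ : MeetImpForm n,
        (ρ ∈ Θm → vsat ρ (k' + 1) w) ∧ (vsat ρ (k' + 1) w → ρ ∈ Θm) := by
      intro ρ
      induction ρ with
      | var j =>
        constructor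
        · intro hmem
          show vcol w j = true
          show c j = true
          simp [c, hmem]
        · intro hsat
          have : c j = true := hsat
          by_contra hn
          simp [c, hn] at this
      | and ρ₁ ρ₂ ihr1 ihr2 =>
        constructor
        · intro hmem
          exact ⟨ihr1.1 (and_left_mem hΘmc hmem), ihr2.1 (and_right_mem hΘmc hmem)⟩
        · intro hsat
          exact and_mem hΘmc (ihr1.2 hsat.1) (ihr2.2 hsat.2)
      | imp α β ihrα ihrβ =>
        constructor
        · intro hmem
          rw [vsat_imp_succ]
          constructor
          · rintro a ⟨ξ, hξ, rfl⟩
            exact (witspec ξ hξ).2.1 _ (hΘmΘ' hmem)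
          · intro hα
            exact ihrβ.1 (mem_of_imp_mem hΘmc (ihrα.2 hα) hmem)
        · intro hsat
          apply deduction hΘmc
          by_cases hα : α ∈ Θm
          · have h1 : vsat α (k' + 1) w := ihrα.1 hα
            have h2 : vsat β (k' + 1) w := vsat_imp_self hsat h1
            exact subset_cl _ (Set.mem_insert_iff.mpr (Or.inr (ihrβ.2 h2)))
          · have hsub : Θ' ⊆ cl (insert α Θm) := hmaxcons α hα
            by_cases him : α.imp β ∈ Θ'
            · exact mem_of_imp_mem (cl_closed _)
                (subset_cl _ (Set.mem_insert _ _)) (hsub him)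
            · exfalso
              have hmem : wit (α.imp β) him ∈ A := ⟨α.imp β, him, rfl⟩
              have := ((vsat_imp_succ α β k' w).mp hsat).1 _ hmem
              exact (witspec (α.imp β) him).2.2 this
    refine ⟨w, ?_, ?_, ?_⟩
    · -- hm
      rintro a ⟨ξ, hξ, rfl⟩
      refine ⟨?_, (witspec ξ hξ).1⟩
      intro j hj
      have hjm : MeetImpForm.var j ∈ Θm := by
        have : c j = true := hj
        by_contra hn
        simp [c, hn] at this
      exact (witspec ξ hξ).2.1 _ (hΘmΘ' hjm)
    · intro ρ hρ
      exact (key ρ).1 (hΘmsub hρ)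
    · intro hsat
      exact hΘmi ((key _).2 hsat)

end DiegoProof
namespace DiegoProof

variable {n : ℕ}

/-! ### The universal model as a genuine Kripke model -/

/-- embedding one level up -/
def emb : ∀ {k : ℕ}, Vt n k → Vt n (k+1)
  | 0, c => (c, ∅)
  | (_+1), w => (w.1, emb '' w.2)

lemma vcol_emb : ∀ {k : ℕ} (w : Vt n k), vcol (emb w) = vcol w
  | 0, _ => rfl
  | (_+1), _ => rfl

lemma vsat_emb (φ : MeetImpForm n) : ∀ (k : ℕ) (w : Vt n k),
    vsat φ (k+1) (emb w) ↔ vsat φ k w := by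
  induction φ with
  | var i =>
    intro k w
    show vcol (emb w) i = true ↔ vcol w i = true
    rw [vcol_emb]
  | and φ ψ ihφ ihψ =>
    intro k w
    exact and_congr (ihφ k w) (ihψ k w)
  | imp φ ψ ihφ ihψ =>
    intro k
    induction k with
    | zero =>
      intro w
      rw [vsat_imp_succ, vsat_imp_zero]
      have : (emb w).2 = (∅ : Set (Vt n 0)) := rfl
      rw [this]
      constructor
      · rintro ⟨-, hself⟩ hφ
        exact (ihψ 0 w).mp (hself ((ihφ 0 w).mpr hφ))
      · intro hself
        refine ⟨by simp, fun hφ => (ihψ 0 w).mpr (hself ((ihφ 0 w).mp hφ))⟩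
    | succ k ihk =>
      intro w
      rw [vsat_imp_succ, vsat_imp_succ]
      have h2 : (emb w).2 = emb '' w.2 := rfl
      constructor
      · rintro ⟨h1, hself⟩
        refine ⟨?_, ?_⟩
        · intro a ha
          have : emb a ∈ (emb w).2 := by rw [h2]; exact ⟨a, ha, rfl⟩
          exact (ihk a).mp (h1 _ this)
        · intro hφw
          exact (ihψ (k+1) w).mp (hself ((ihφ (k+1) w).mpr hφw))
      · rintro ⟨h1, hself⟩
        refine ⟨?_, ?_⟩
        · intro a' ha'
          rw [h2] at ha'
          obtain ⟨a, ha, rfl⟩ := ha'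
          exact (ihk a).mpr (h1 a ha)
        · intro hφw
          exact (ihψ (k+1) w).mpr (hself ((ihφ (k+1) w).mp hφw))

lemma hm_emb : ∀ {k : ℕ} (w : Vt n k), hm w → hm (emb w)
  | 0, c, _ => by
    intro a ha
    exact absurd ha (by exact Set.notMem_empty a)
  | (k+1), w, hw => by
    rintro a' ⟨a, ha, rfl⟩
    refine ⟨?_, hm_emb a (hw a ha).2⟩
    intro i hi
    rw [vcol_emb]
    exact (hw a ha).1 i hi

/-- height of a tree-like point -/
noncomputable def ht : ∀ {k : ℕ}, Vt n k → ℕ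
  | 0, _ => 1
  | (_+1), w => ((Set.toFinite w.2).toFinset.sup (fun a => ht a)) + 1

lemma ht_mem_lt {k : ℕ} {w : Vt n (k+1)} {a : Vt n k} (ha : a ∈ w.2) :
    ht a < ht w := by
  have : ht a ≤ (Set.toFinite w.2).toFinset.sup (fun a => ht a) :=
    Finset.le_sup (by rw [Set.Finite.mem_toFinset]; exact ha)
  calc ht a ≤ _ := this
  _ < _ + 1 := Nat.lt_succ_self _
  
lemma ht_emb : ∀ {k : ℕ} (w : Vt n k), ht (emb w) = ht w
  | 0, c => by
    show ((Set.toFinite (∅ : Set (Vt n 0))).toFinset.sup (fun a => ht a)) + 1 = 1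
    simp
  | (k+1), w => by
    show ((Set.toFinite (emb '' w.2)).toFinset.sup (fun a => ht a)) + 1
      = ((Set.toFinite w.2).toFinset.sup (fun a => ht a)) + 1
    congr 1
    apply le_antisymm
    · apply Finset.sup_le
      intro b hb
      rw [Set.Finite.mem_toFinset] at hb
      obtain ⟨a, ha, rfl⟩ := hb
      rw [ht_emb a]
      exact Finset.le_sup (by rw [Set.Finite.mem_toFinset]; exact ha)
    · apply Finset.sup_le
      intro a ha
      rw [Set.Finite.mem_toFinset] at ha
      have : emb a ∈ emb '' w.2 := ⟨a, ha, rfl⟩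
      calc ht a = ht (emb a) := (ht_emb a).symm
      _ ≤ _ := Finset.le_sup (by rw [Set.Finite.mem_toFinset]; exact this)

/-- one-step relation at the top level -/
def stepR (x y : Vt n (n+1)) : Prop := ∃ a ∈ x.2, y = emb a

/-- reachability -/
def Rel : Vt n (n+1) → Vt n (n+1) → Prop := Relation.ReflTransGen stepR

lemma stepR_ht {x y : Vt n (n+1)} (h : stepR x y) : ht y < ht x := by
  obtain ⟨a, ha, rfl⟩ := h
  rw [ht_emb]
  exact ht_mem_lt ha

lemma Rel_ht {x y : Vt n (n+1)} (h : Rel x y) : ht y ≤ ht x := by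
  induction h with
  | refl => exact le_rfl
  | tail _ hstep ih => exact le_trans (le_of_lt (stepR_ht hstep)) ih

lemma Rel_antisymm {x y : Vt n (n+1)} (h1 : Rel x y) (h2 : Rel y x) : x = y := by
  rcases Relation.ReflTransGen.cases_head h1 with rfl | ⟨z, hstep, hrel⟩
  · rfl
  · exfalso
    have : ht x < ht x :=
      lt_of_le_of_lt (le_trans (Rel_ht h2) (Rel_ht hrel)) (stepR_ht hstep)
    omega

lemma hm_step {x y : Vt n (n+1)} (hx : hm x) (h : stepR x y) : hm y := by
  obtain ⟨a, ha, rfl⟩ := h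
  exact hm_emb a (hx a ha).2

lemma hm_Rel {x y : Vt n (n+1)} (hx : hm x) (h : Rel x y) : hm y := by
  induction h with
  | refl => exact hx
  | tail _ hstep ih => exact hm_step ih hstep

lemma stepR_col {x y : Vt n (n+1)} (hx : hm x) (h : stepR x y) :
    ∀ i, vcol x i = true → vcol y i = true := by
  obtain ⟨a, ha, rfl⟩ := h
  intro i hi
  rw [vcol_emb]
  exact (hx a ha).1 i hi

lemma Rel_col {x y : Vt n (n+1)} (hx : hm x) (h : Rel x y) :
    ∀ i, vcol x i = true → vcol y i = true := by
  induction h with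
  | refl => exact fun _ h => h
  | tail hrel hstep ih =>
    intro i hi
    exact stepR_col (hm_Rel hx hrel) hstep i (ih i hi)

/-- the carrier of the universal model -/
def UW (n : ℕ) : Type := {w : Vt n (n+1) // hm w}

instance : Finite (UW n) := by
  unfold UW
  infer_instance

instance UWorder : PartialOrder (UW n) where
  le x y := Rel x.1 y.1
  le_refl x := Relation.ReflTransGen.refl
  le_trans x y z h1 h2 := Relation.ReflTransGen.trans h1 h2
  le_antisymm x y h1 h2 := Subtype.ext (Rel_antisymm h1 h2)

lemma UW_le_iff (x y : UW n) : x ≤ y ↔ Rel x.1 y.1 := Iff.rfl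

/-- the universal Kripke model -/
noncomputable def MU (n : ℕ) : KripkeModel n where
  W := UW n
  col w := vcol w.1
  mono := by
    intro x y hxy
    intro i
    rw [Bool.le_iff_imp]
    exact Rel_col x.2 hxy i

end DiegoProof
namespace DiegoProof

variable {n : ℕ}

lemma corr (φ : MeetImpForm n) : ∀ (w : Vt n (n+1)) (hw : hm w),
    MeetImpSat (MU n) φ ⟨w, hw⟩ ↔ vsat φ (n+1) w := by
  induction φ with
  | var i => exact fun w hw => Iff.rfl
  | and φ ψ ihφ ihψ =>
    intro w hw
    constructor
    · intro h
      exact ⟨(ihφ w hw).mp h.1, (ihψ w hw).mp h.2⟩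
    · intro h
      exact ⟨(ihφ w hw).mpr h.1, (ihψ w hw).mpr h.2⟩
  | imp φ ψ ihφ ihψ =>
    suffices H : ∀ (m : ℕ) (w : Vt n (n+1)) (hw : hm w), ht w < m →
        (MeetImpSat (MU n) (φ.imp ψ) ⟨w, hw⟩ ↔ vsat (φ.imp ψ) (n+1) w) from
      fun w hw => H (ht w + 1) w hw (Nat.lt_succ_self _)
    intro m
    induction m with
    | zero => intro w hw h; omega
    | succ m ihm =>
      intro w hw hltm
      rw [vsat_imp_succ]
      constructor
      · intro H
        constructor
        · intro a ha
          have hma : hm (emb a) := hm_emb a (hw a ha).2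
          have hlt : ht (emb a) < m := by
            have h1 := ht_mem_lt (w := w) ha
            rw [ht_emb]
            omega
          rw [← vsat_emb (φ.imp ψ) n a, ← ihm (emb a) hma hlt]
          intro y hy hφy
          exact H y (le_trans (Relation.ReflTransGen.single ⟨a, ha, rfl⟩) hy) hφy
        · intro hφw
          exact (ihψ w hw).mp (H ⟨w, hw⟩ le_rfl ((ihφ w hw).mpr hφw))
      · rintro ⟨hchild, hself⟩
        intro y hy hφy
        rcases Relation.ReflTransGen.cases_head hy with heq | ⟨z, hstep, hrel⟩
        · have hyw : y = ⟨w, hw⟩ := Subtype.ext heq.symm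
          subst hyw
          exact (ihψ w hw).mpr (hself ((ihφ w hw).mp hφy))
        · obtain ⟨a, ha, rfl⟩ := hstep
          have hma : hm (emb a) := hm_emb a (hw a ha).2
          have hlt : ht (emb a) < m := by
            have h1 := ht_mem_lt (w := w) ha
            rw [ht_emb]
            omega
          have hsat : MeetImpSat (MU n) (φ.imp ψ) ⟨emb a, hma⟩ := by
            rw [ihm (emb a) hma hlt]
            exact (vsat_emb (φ.imp ψ) n a).mpr (hchild a ha)
          exact hsat y hrel hφy

end DiegoProof

/-- Diego's theorem, syntactic form: up to semantic equivalence over all Kripke models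
on `n` variables, there are only finitely many `(∧,→)`-formulas over `n` variables. -/
theorem diego_finitely_many_meetImp_formulas (n : ℕ) :
    Finite (Quot (fun φ ψ : MeetImpForm n =>
      ∀ (M : KripkeModel n) (x : M.W), MeetImpSat M φ x ↔ MeetImpSat M ψ x)) := by
  classical
  open DiegoProof in
  set r := fun φ ψ : MeetImpForm n =>
    ∀ (M : KripkeModel n) (x : M.W), MeetImpSat M φ x ↔ MeetImpSat M ψ x with hr
  have resp : ∀ φ ψ : MeetImpForm n, r φ ψ →
      (fun y : UW n => MeetImpSat (MU n) φ y) = (fun y => MeetImpSat (MU n) ψ y) := by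
    intro φ ψ h
    funext y
    exact propext (h (MU n) y)
  let F : Quot r → (UW n → Prop) :=
    Quot.lift (fun φ => fun y : UW n => MeetImpSat (MU n) φ y) resp
  have hinj : Function.Injective F := by
    intro q1 q2 h
    induction q1 using Quot.ind with | _ φ =>
    induction q2 using Quot.ind with | _ ψ =>
    apply Quot.sound
    intro M x
    by_contra hniff
    have hfun : (fun y : UW n => MeetImpSat (MU n) φ y)
        = (fun y : UW n => MeetImpSat (MU n) ψ y) := h
    have hGy : ∀ y : UW n, MeetImpSat (MU n) φ y ↔ MeetImpSat (MU n) ψ y :=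
      fun y => iff_of_eq (congrFun hfun y)
    by_cases hφx : MeetImpSat M φ x
    · have hψx : ¬ MeetImpSat M ψ x := fun hψ => hniff ⟨fun _ => hψ, fun _ => hφx⟩
      have hΘc : ClosedS {ρ : MeetImpForm n | MeetImpSat M ρ x} := theory_closed M x
      obtain ⟨w, hw, hall, hnot⟩ :=
        Jmain n ψ {ρ : MeetImpForm n | MeetImpSat M ρ x} hΘc (defc_le_n _) hψx
          (n+1) (Nat.lt_succ_self _)
      have h1 : MeetImpSat (MU n) φ ⟨w, hw⟩ := (corr φ w hw).mpr (hall φ hφx)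
      have h2 : ¬ MeetImpSat (MU n) ψ ⟨w, hw⟩ := fun hc => hnot ((corr ψ w hw).mp hc)
      exact h2 ((hGy ⟨w, hw⟩).mp h1)
    · have hψx : MeetImpSat M ψ x := by
        by_contra hψ
        exact hniff ⟨fun hh => absurd hh hφx, fun hh => absurd hh hψ⟩
      have hΘc : ClosedS {ρ : MeetImpForm n | MeetImpSat M ρ x} := theory_closed M x
      obtain ⟨w, hw, hall, hnot⟩ :=
        Jmain n φ {ρ : MeetImpForm n | MeetImpSat M ρ x} hΘc (defc_le_n _) hφx
          (n+1) (Nat.lt_succ_self _)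
      have h1 : MeetImpSat (MU n) ψ ⟨w, hw⟩ := (corr ψ w hw).mpr (hall ψ hψx)
      have h2 : ¬ MeetImpSat (MU n) φ ⟨w, hw⟩ := fun hc => hnot ((corr φ w hw).mp hc)
      exact h2 ((hGy ⟨w, hw⟩).mpr h1)
  exact Finite.of_injective F hinj
end

section
/- There is no (∧,→)-formula φ in the single variable p that is semantically equivalent to ¬¬p: for every formula φ built from p using only ∧ and →, there exist a model M on one variable and a point x ∈ M such that M, x ⊨ φ does not coincide with M, x ⊨ ¬¬p (where ¬¬p abbreviates (p → ⊥) → ⊥). -/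
/-- Intuitionistic (IPC) formulas over `n` propositional variables, built from the
variables using `∧`, `∨`, `→` and `⊥`. -/
inductive IPCForm (n : ℕ) : Type
  | var (i : Fin n) : IPCForm n
  | bot : IPCForm n
  | and (φ ψ : IPCForm n) : IPCForm n
  | or (φ ψ : IPCForm n) : IPCForm n
  | imp (φ ψ : IPCForm n) : IPCForm n

/-- Kripke satisfaction of an intuitionistic formula in a model. -/
def IPCSat {n : ℕ} (M : KripkeModel n) : IPCForm n → M.W → Prop
  | .var i, x => M.col x i = true
  | .bot, _ => False
  | .and φ ψ, x => IPCSat M φ x ∧ IPCSat M ψ x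
  | .or φ ψ, x => IPCSat M φ x ∨ IPCSat M ψ x
  | .imp φ ψ, x => ∀ y : M.W, x ≤ y → IPCSat M φ y → IPCSat M ψ y

/-- The formula `¬¬p`, i.e. `(p → ⊥) → ⊥`, in the single variable `p`. -/
def notNotP : IPCForm 1 :=
  IPCForm.imp (IPCForm.imp (IPCForm.var 0) IPCForm.bot) IPCForm.bot

/-- One-point model, variable false. -/
def M1 : KripkeModel 1 :=
  { W := PUnit, ord := inferInstance, col := fun _ _ => false, mono := monotone_const }

/-- Two-point chain model `false < true`, variable true only at top. -/
noncomputable def M2 : KripkeModel 1 :=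
  { W := Bool, ord := inferInstance, col := fun b _ => b,
    mono := fun _ _ h _ => h }

lemma dich (φ : MeetImpForm 1) :
    (∀ (M : KripkeModel 1) (x : M.W), MeetImpSat M φ x) ∨
    (∀ (M : KripkeModel 1) (x : M.W), MeetImpSat M φ x ↔ M.col x 0 = true) := by
  induction φ with
  | var i =>
    right; intro M x
    have : i = 0 := Subsingleton.elim _ _
    simp [MeetImpSat, this]
  | and φ ψ ihφ ihψ =>
    rcases ihφ with h1 | h1 <;> rcases ihψ with h2 | h2
    · left; intro M x; exact ⟨h1 M x, h2 M x⟩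
    · right; intro M x
      constructor
      · rintro ⟨_, hb⟩; exact (h2 M x).mp hb
      · intro hc; exact ⟨h1 M x, (h2 M x).mpr hc⟩
    · right; intro M x
      constructor
      · rintro ⟨ha, _⟩; exact (h1 M x).mp ha
      · intro hc; exact ⟨(h1 M x).mpr hc, h2 M x⟩
    · right; intro M x
      constructor
      · rintro ⟨ha, _⟩; exact (h1 M x).mp ha
      · intro hc; exact ⟨(h1 M x).mpr hc, (h2 M x).mpr hc⟩
  | imp φ ψ ihφ ihψ =>
    rcases ihψ with h2 | h2
    · left; intro M x y _ _; exact h2 M y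
    · rcases ihφ with h1 | h1
      · right; intro M x
        constructor
        · intro h; exact (h2 M x).mp (h x le_rfl (h1 M x))
        · intro hc y hy _
          refine (h2 M y).mpr ?_
          have := M.mono hy 0
          rw [hc] at this
          cases hb : M.col y 0
          · rw [hb] at this; exact absurd this (by simp)
          · rfl
      · left; intro M x y _ hφ
        exact (h2 M y).mpr ((h1 M y).mp hφ)

/-- No `(∧,→)`-formula in the single variable `p` is semantically equivalent to
`¬¬p`: for every such formula there is a model on one variable and a point at which
the two formulas disagree. -/
theorem no_meetImp_formula_equiv_notnot :
    ∀ φ : MeetImpForm 1, ∃ (M : KripkeModel 1) (x : M.W),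
      ¬ (MeetImpSat M φ x ↔ IPCSat M notNotP x) := by
  intro φ
  rcases dich φ with h | h
  · refine ⟨M1, PUnit.unit, fun hiff => ?_⟩
    have hnn : IPCSat M1 notNotP PUnit.unit := hiff.mp (h M1 _)
    exact hnn PUnit.unit le_rfl (fun z _ hz => by simp [M1, IPCSat] at hz)
  · refine ⟨M2, false, fun hiff => ?_⟩
    have hnn : IPCSat M2 notNotP false := by
      intro y _ hnp
      exact hnp true (Bool.le_true y) rfl
    have := (h M2 false).mp (hiff.mpr hnn)
    simp [M2] at this
end

section
/- Let χ be a (∧,→)-formula in the single variable p. If ¬¬p semantically implies χ, i.e. for every model M on one variable and every x ∈ M, M, x ⊨ ¬¬p implies M, x ⊨ χ (where ¬¬p abbreviates (p → ⊥) → ⊥), then χ is valid: M, x ⊨ χ for every model M on one variable and every x ∈ M. Consequently, the uniform interpolant of p → (q → p) with respect to p within the (∧,→)-fragment of IPC is the trivially true formula ⊤. -/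
/-- Extend a model by a new top point where all variables hold. -/
def KripkeModel.extendTop {n : ℕ} (M : KripkeModel n) : KripkeModel n where
  W := WithTop M.W
  col := fun w => match w with
    | ⊤ => fun _ => true
    | (x : M.W) => M.col x
  mono := by
    intro a b hab
    match b with
    | ⊤ => intro i; simp
    | (y : M.W) =>
      match a with
      | ⊤ => exact absurd hab (by simp)
      | (x : M.W) => exact M.mono (WithTop.coe_le_coe.mp hab)

/-- Every `(∧,→)`-formula holds at the new top point. -/
lemma meetImpSat_top {n : ℕ} (M : KripkeModel n) (χ : MeetImpForm n) :
    MeetImpSat M.extendTop χ (⊤ : WithTop M.W) := by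
  induction χ with
  | var i => rfl
  | and φ ψ ihφ ihψ => exact ⟨ihφ, ihψ⟩
  | imp φ ψ ihφ ihψ =>
    intro y hy _
    have : y = (⊤ : WithTop M.W) := (top_le_iff (α := WithTop M.W)).mp hy
    rw [this]
    exact ihψ

/-- `(∧,→)`-satisfaction transfers between a model and its top extension. -/
lemma meetImpSat_extendTop_iff {n : ℕ} (M : KripkeModel n) (χ : MeetImpForm n) :
    ∀ x : M.W, MeetImpSat M.extendTop χ (x : WithTop M.W) ↔ MeetImpSat M χ x := by
  induction χ with
  | var i => intro x; rfl
  | and φ ψ ihφ ihψ =>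
    intro x
    exact and_congr (ihφ x) (ihψ x)
  | imp φ ψ ihφ ihψ =>
    intro x
    constructor
    · intro h y hxy hφ
      exact (ihψ y).mp (h (y : WithTop M.W) (WithTop.coe_le_coe.mpr hxy) ((ihφ y).mpr hφ))
    · intro h y hxy hφ
      match y with
      | (⊤ : WithTop M.W) => exact meetImpSat_top M ψ
      | ((z : M.W) : WithTop M.W) =>
        exact (ihψ z).mpr (h z (WithTop.coe_le_coe.mp hxy) ((ihφ z).mp hφ))

/-- If a `(∧,→)`-formula `χ` in the single variable `p` is a semantic consequence of
`¬¬p` (over all Kripke models on one variable), then `χ` is valid. Hence the uniform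
interpolant of `p → (q → p)` with respect to `p` within the `(∧,→)`-fragment of IPC
is the trivially true formula `⊤`. -/
theorem meetImp_consequence_of_notnot_is_valid (χ : MeetImpForm 1)
    (h : ∀ (M : KripkeModel 1) (x : M.W), IPCSat M notNotP x → MeetImpSat M χ x) :
    ∀ (M : KripkeModel 1) (x : M.W), MeetImpSat M χ x := by
  intro M x
  have hnn : IPCSat M.extendTop notNotP (x : WithTop M.W) := by
    intro y _ hpbot
    exact hpbot (⊤ : WithTop M.W) (le_top (α := WithTop M.W)) rfl
  exact (meetImpSat_extendTop_iff M χ x).mp (h M.extendTop (x : WithTop M.W) hnn)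
end
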